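/- There exists Δ₀ such that the following holds. Let G = (V,E) be a finite simple graph with maximum degree Δ ≥ Δ₀ and minimum degree δ ≥ 10^{20}·ln Δ, let U ⊆ V satisfy |d_U(v) − 10^{-4}·d(v)| ≤ 10^{-6}·d(v) for all v ∈ V, and set W = V ∖ U and F = E(U,W). Then there exists F_W ⊆ F such that for every w ∈ W one has |d_{F_W}(w) − 10^{-4}·d_U(w)| ≤ 10^{-6}·d_U(w), and for every u ∈ U one has |d_{F_W}(u) − 10^{-4}·d_W(u)| ≤ 10^{-6}·d_W(u). -/

import Mathlib

/-- Number of neighbours of `v` that lie in the vertex set `A`. -/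
def dIn {V : Type} [Fintype V] [DecidableEq V] (G : SimpleGraph V) [DecidableRel G.Adj]
    (A : Finset V) (v : V) : ℕ :=
  (G.neighborFinset v ∩ A).card

/-- Number of edges of the edge set `F` incident with `v`. -/
def dE {V : Type} [DecidableEq V] (F : Finset (Sym2 V)) (v : V) : ℕ :=
  (F.filter (fun e => v ∈ e)).card

/-- The set `E(A,B)` of edges of `G` with one end in `A` and the other in `B`. -/
def between {V : Type} [Fintype V] [DecidableEq V] (G : SimpleGraph V) [DecidableRel G.Adj]
    (A B : Finset V) : Finset (Sym2 V) :=
  G.edgeFinset.filter (fun e => ∃ a ∈ A, ∃ b ∈ B, e = s(a, b))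

set_option linter.unusedSectionVars false

namespace Split
variable {V : Type} [DecidableEq V]

lemma dE_empty (v : V) : dE (∅ : Finset (Sym2 V)) v = 0 := by simp [dE]

lemma dE_union {A B : Finset (Sym2 V)} (h : Disjoint A B) (v : V) :
    dE (A ∪ B) v = dE A v + dE B v := by
  unfold dE
  rw [Finset.filter_union, Finset.card_union_of_disjoint]
  exact Finset.disjoint_filter_filter h

def tEdges : List V → List (Sym2 V)
  | a :: c :: l => s(a, c) :: tEdges (c :: l)
  | _ => []

def sel : Bool → List V → Finset (Sym2 V)
  | b, a :: c :: l => (if b then {s(a, c)} else ∅) ∪ sel (!b) (c :: l)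
  | _, _ => ∅

lemma sel_subset : ∀ (b : Bool) (p : List V), sel b p ⊆ (tEdges p).toFinset
  | b, [] => by simp [sel]
  | b, [a] => by simp [sel]
  | b, a :: c :: l => by
    simp only [sel, tEdges, List.toFinset_cons]
    intro e he
    rcases Finset.mem_union.1 he with h | h
    · rcases b with _ | _
      · simp at h
      · simp at h; simp [h]
    · exact Finset.mem_insert_of_mem (sel_subset (!b) (c :: l) h)

lemma dE_singleton (e : Sym2 V) (v : V) :
    dE ({e} : Finset (Sym2 V)) v = if v ∈ e then 1 else 0 := by
  unfold dE
  rw [Finset.filter_singleton]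
  split <;> simp

lemma dE_insert {F : Finset (Sym2 V)} {e : Sym2 V} (h : e ∉ F) (v : V) :
    dE (insert e F) v = (if v ∈ e then 1 else 0) + dE F v := by
  rw [Finset.insert_eq, dE_union (by simpa using h), dE_singleton]

lemma sel_formula : ∀ (l : List V) (b : Bool) (a c : V),
    (tEdges (a :: c :: l)).Nodup → (∀ e ∈ tEdges (a :: c :: l), ¬ e.IsDiag) → ∀ v : V,
    ∃ ε : ℤ, -1 ≤ ε ∧ ε ≤ 1 ∧
      2 * (dE (sel b (a :: c :: l)) v : ℤ) =
        (dE (tEdges (a :: c :: l)).toFinset v : ℤ)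
        + (if v = a then (if b then 1 else -1) else 0)
        + (if v = (c :: l).getLast (List.cons_ne_nil c l) then ε else 0)
  | [], b, a, c, hnd, hdiag, v => by
    have hac : a ≠ c := by
      have := hdiag s(a, c) (by simp [tEdges])
      simpa [Sym2.isDiag_iff_proj_eq] using this
    refine ⟨if b then 1 else -1, by rcases b <;> norm_num, by rcases b <;> norm_num, ?_⟩
    have h1 : sel b [a, c] = (if b then {s(a, c)} else ∅) := by
      rcases b with _ | _ <;> simp [sel]
    have h2 : (tEdges [a, c]).toFinset = {s(a, c)} := by simp [tEdges]
    rw [h1, h2, List.getLast_singleton]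
    have hmem : v ∈ s(a, c) ↔ v = a ∨ v = c := Sym2.mem_iff
    rcases eq_or_ne v a with rfl | hva <;> rcases eq_or_ne v c with rfl | hvc <;>
      rcases b with _ | _ <;>
      simp_all [dE_singleton, dE_empty]
  | d :: l, b, a, c, hnd, hdiag, v => by
    have hnd' : (s(a, c) :: tEdges (c :: d :: l)).Nodup := hnd
    have hac : a ≠ c := by
      have := hdiag s(a, c) (by simp [tEdges])
      simpa [Sym2.isDiag_iff_proj_eq] using this
    have hnotmem : s(a, c) ∉ tEdges (c :: d :: l) := (List.nodup_cons.1 hnd').1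
    obtain ⟨ε, hε1, hε2, hIH⟩ := sel_formula l (!b) c d hnd'.of_cons
      (fun e he => hdiag e (List.mem_cons_of_mem _ he)) v
    refine ⟨ε, hε1, hε2, ?_⟩
    have hsel : dE (sel b (a :: c :: d :: l)) v
        = (if b then (if v ∈ s(a, c) then 1 else 0) else 0) + dE (sel (!b) (c :: d :: l)) v := by
      show dE ((if b then {s(a, c)} else ∅) ∪ sel (!b) (c :: d :: l)) v = _
      rcases b with _ | _
      · simp
      · simp only [if_true]
        rw [dE_union, dE_singleton]
        simp only [Finset.disjoint_singleton_left]
        intro hc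
        exact hnotmem (by simpa using List.mem_toFinset.1 (sel_subset _ _ hc))
    have hT : dE (tEdges (a :: c :: d :: l)).toFinset v
        = (if v ∈ s(a, c) then 1 else 0) + dE (tEdges (c :: d :: l)).toFinset v := by
      show dE (List.toFinset (s(a, c) :: tEdges (c :: d :: l))) v = _
      rw [List.toFinset_cons, dE_insert (by simpa using hnotmem)]
    have hlast : (c :: d :: l).getLast (List.cons_ne_nil c (d :: l))
        = (d :: l).getLast (List.cons_ne_nil d l) := List.getLast_cons _
    rw [hsel, hT, hlast]
    have hmem : v ∈ s(a, c) ↔ v = a ∨ v = c := Sym2.mem_iff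
    push_cast
    rcases eq_or_ne v a with rfl | hva <;> rcases eq_or_ne v c with rfl | hvc <;>
      rcases eq_or_ne v ((d :: l).getLast (List.cons_ne_nil d l)) with heq | hne <;>
      rcases b with _ | _ <;>
      simp_all <;> omega

lemma dE_mono {A B : Finset (Sym2 V)} (h : A ⊆ B) (v : V) : dE A v ≤ dE B v :=
  Finset.card_le_card (Finset.filter_subset_filter _ h)

lemma dE_sdiff_add {A B : Finset (Sym2 V)} (h : A ⊆ B) (v : V) :
    dE A v + dE (B \ A) v = dE B v := by
  rw [← dE_union (Finset.disjoint_sdiff) v, Finset.union_sdiff_of_subset h]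

lemma dE_eq_zero {F : Finset (Sym2 V)} {v : V} (h : ∀ e ∈ F, v ∉ e) : dE F v = 0 := by
  unfold dE
  rw [Finset.card_eq_zero, Finset.filter_eq_empty_iff]
  exact h

def Sat (F : Finset (Sym2 V)) (p : List V) (x : V) : Prop :=
  ∀ e ∈ F, x ∈ e → e ∈ tEdges p

lemma tEdges_append : ∀ (l : List V) (c u : V),
    tEdges ((c :: l) ++ [u]) = tEdges (c :: l) ++ [s((c :: l).getLast (List.cons_ne_nil c l), u)]
  | [], c, u => by simp [tEdges]
  | d :: l, c, u => by
    show s(c, d) :: tEdges ((d :: l) ++ [u]) = (s(c, d) :: tEdges (d :: l)) ++ _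
    rw [tEdges_append l d u, List.getLast_cons (List.cons_ne_nil d l)]
    simp

lemma grow : ∀ (n : ℕ) (F : Finset (Sym2 V)) (a c : V) (l : List V),
    (tEdges (a :: c :: l)).Nodup → (∀ e ∈ tEdges (a :: c :: l), e ∈ F) →
    F.card ≤ (tEdges (a :: c :: l)).length + n →
    ∃ (a' : V) (c' : V) (l' : List V), (tEdges (a' :: c' :: l')).Nodup ∧
      (∀ e ∈ tEdges (a' :: c' :: l'), e ∈ F) ∧
      Sat F (a' :: c' :: l') a' ∧
      Sat F (a' :: c' :: l') ((c' :: l').getLast (List.cons_ne_nil c' l'))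
  | 0, F, a, c, l, hnd, hsub, hcard => by
    refine ⟨a, c, l, hnd, hsub, ?_, ?_⟩ <;>
    · intro e he _
      have h1 : (tEdges (a :: c :: l)).toFinset ⊆ F := fun x hx =>
        hsub x (List.mem_toFinset.1 hx)
      have h2 : F = (tEdges (a :: c :: l)).toFinset := by
        apply (Finset.eq_of_subset_of_card_le h1 ?_).symm
        rw [List.toFinset_card_of_nodup hnd]
        omega
      rw [h2] at he
      exact List.mem_toFinset.1 he
  | n + 1, F, a, c, l, hnd, hsub, hcard => by
    by_cases hA : Sat F (a :: c :: l) a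
    · by_cases hB : Sat F (a :: c :: l) ((c :: l).getLast (List.cons_ne_nil c l))
      · exact ⟨a, c, l, hnd, hsub, hA, hB⟩
      · -- extend at the end
        simp only [Sat, not_forall] at hB
        obtain ⟨e, heF, hve, henot⟩ := hB
        obtain ⟨u, rfl⟩ := Sym2.mem_iff_exists.1 hve
        have hlast : (a :: c :: l).getLast (List.cons_ne_nil _ _)
            = (c :: l).getLast (List.cons_ne_nil c l) := List.getLast_cons _
        have hte : tEdges (a :: c :: (l ++ [u]))
            = tEdges (a :: c :: l) ++ [s((c :: l).getLast (List.cons_ne_nil c l), u)] := by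
          have := tEdges_append (c :: l) a u
          rw [hlast] at this
          exact this
        apply grow n F a c (l ++ [u])
        · rw [hte]
          simp only [List.nodup_append, List.nodup_cons, List.not_mem_nil, not_false_iff,
            List.nodup_nil, and_true, List.nodup_singleton, true_and]
          refine ⟨hnd, ?_⟩
          intro x hx
          simp only [List.mem_singleton]
          rintro _ rfl rfl
          exact henot hx
        · intro e he
          rw [hte] at he
          rcases List.mem_append.1 he with h | h
          · exact hsub e h
          · simp only [List.mem_singleton] at h
            subst h
            exact heF
        · rw [hte]
          simp only [List.length_append, List.length_singleton]
          omega
    · -- extend at the head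
      simp only [Sat, not_forall] at hA
      obtain ⟨e, heF, hve, henot⟩ := hA
      obtain ⟨u, rfl⟩ := Sym2.mem_iff_exists.1 hve
      apply grow n F u a (c :: l)
      · show (s(u, a) :: tEdges (a :: c :: l)).Nodup
        rw [List.nodup_cons]
        exact ⟨by rwa [Sym2.eq_swap], hnd⟩
      · intro e he
        rcases List.mem_cons.1 he with h | h
        · subst h; rwa [Sym2.eq_swap]
        · exact hsub e h
      · have h1 : (tEdges (u :: a :: c :: l)).length = (tEdges (a :: c :: l)).length + 1 := by
          show (s(u, a) :: tEdges (a :: c :: l)).length = _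
          simp
        omega

lemma exists_maximal_trail (F : Finset (Sym2 V)) (hne : F.Nonempty) :
    ∃ (a : V) (c : V) (l : List V), (tEdges (a :: c :: l)).Nodup ∧
      (∀ e ∈ tEdges (a :: c :: l), e ∈ F) ∧
      Sat F (a :: c :: l) a ∧
      Sat F (a :: c :: l) ((c :: l).getLast (List.cons_ne_nil c l)) := by
  obtain ⟨e, he⟩ := hne
  induction e using Sym2.inductionOn with
  | hf x y =>
    apply grow F.card F x y []
    · simp [tEdges]
    · intro e' he'
      have h : e' = s(x, y) := by simpa [tEdges] using he'
      subst h; exact he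
    · simp only [tEdges, List.length_cons, List.length_nil]
      omega


theorem exists_half (F : Finset (Sym2 V)) :
    (∀ e ∈ F, ¬ e.IsDiag) →
    ∃ H, H ⊆ F ∧ ∀ v, ((dE F v : ℤ) ≤ 2 * dE H v + 2 ∧ 2 * (dE H v : ℤ) ≤ dE F v + 2) := by
  induction F using Finset.strongInduction with
  | _ F ih =>
    intro hdiag
    rcases F.eq_empty_or_nonempty with rfl | hne
    · exact ⟨∅, Finset.Subset.refl _, fun v => by simp [dE_empty]⟩
    · obtain ⟨a, c, l, hnd, hsub, hSa, hSb⟩ := exists_maximal_trail F hne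
      have hTF : (tEdges (a :: c :: l)).toFinset ⊆ F :=
        fun e he => hsub e (List.mem_toFinset.1 he)
      have hTne : ((tEdges (a :: c :: l)).toFinset).Nonempty := ⟨s(a, c), by simp [tEdges]⟩
      obtain ⟨H₁, hH₁sub, hH₁⟩ := ih (F \ (tEdges (a :: c :: l)).toFinset)
        (Finset.sdiff_ssubset hTF hTne)
        (fun e he => hdiag e ((Finset.mem_sdiff.1 he).1))
      have hselT : sel true (a :: c :: l) ⊆ (tEdges (a :: c :: l)).toFinset := sel_subset true _
      refine ⟨sel true (a :: c :: l) ∪ H₁, ?_, ?_⟩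
      · exact Finset.union_subset (hselT.trans hTF) (hH₁sub.trans (Finset.sdiff_subset))
      · intro v
        have hdisj : Disjoint (sel true (a :: c :: l)) H₁ := by
          rw [Finset.disjoint_left]
          intro e he1 he2
          exact (Finset.mem_sdiff.1 (hH₁sub he2)).2 (hselT he1)
        have hEu : dE (sel true (a :: c :: l) ∪ H₁) v
            = dE (sel true (a :: c :: l)) v + dE H₁ v := dE_union hdisj v
        have hEF : dE (tEdges (a :: c :: l)).toFinset v
            + dE (F \ (tEdges (a :: c :: l)).toFinset) v = dE F v := dE_sdiff_add hTF v
        obtain ⟨ε, he1, he2, hfor⟩ := sel_formula l true a c hnd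
          (fun e he => hdiag e (hsub e he)) v
        have hbound := hH₁ v
        rw [hEu]
        by_cases hend : v = a ∨ v = (c :: l).getLast (List.cons_ne_nil c l)
        · have h0 : dE (F \ (tEdges (a :: c :: l)).toFinset) v = 0 := by
            apply dE_eq_zero
            intro e he hve
            obtain ⟨heF, heT⟩ := Finset.mem_sdiff.1 he
            rcases hend with rfl | rfl
            · exact heT (List.mem_toFinset.2 (hSa e heF hve))
            · exact heT (List.mem_toFinset.2 (hSb e heF hve))
          have h0' : dE H₁ v = 0 := Nat.le_zero.1 (h0 ▸ dE_mono hH₁sub v)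
          have hA : (if v = a then (if true then (1 : ℤ) else -1) else 0) ≤ 1 := by
            split_ifs <;> norm_num
          have hA' : (-1 : ℤ) ≤ (if v = a then (if true then (1 : ℤ) else -1) else 0) := by
            split_ifs <;> norm_num
          have hB : (if v = (c :: l).getLast (List.cons_ne_nil c l) then ε else 0) ≤ 1 := by
            split_ifs <;> omega
          have hB' : (-1 : ℤ) ≤
              (if v = (c :: l).getLast (List.cons_ne_nil c l) then ε else 0) := by
            split_ifs <;> omega
          omega
        · push_neg at hend
          rw [if_neg hend.1, if_neg hend.2] at hfor
          omega


noncomputable def halfSet (F : Finset (Sym2 V)) : Finset (Sym2 V) :=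
  if h : ∀ e ∈ F, ¬ e.IsDiag then (exists_half F h).choose else ∅

lemma halfSet_subset (F : Finset (Sym2 V)) : halfSet F ⊆ F := by
  unfold halfSet
  split_ifs with h
  · exact (exists_half F h).choose_spec.1
  · exact Finset.empty_subset _

lemma halfSet_spec {F : Finset (Sym2 V)} (h : ∀ e ∈ F, ¬ e.IsDiag) (v : V) :
    (dE F v : ℤ) ≤ 2 * dE (halfSet F) v + 2 ∧ 2 * (dE (halfSet F) v : ℤ) ≤ dE F v + 2 := by
  unfold halfSet
  rw [dif_pos h]
  exact (exists_half F h).choose_spec.2 v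

noncomputable def pick : ℕ → ℝ → Finset (Sym2 V) → Finset (Sym2 V)
  | 0, _, _ => ∅
  | k + 1, α, F =>
      if (1 : ℝ) / 2 ≤ α then (F \ halfSet F) ∪ pick k (2 * α - 1) (halfSet F)
      else pick k (2 * α) (halfSet F)

lemma pick_subset : ∀ (k : ℕ) (α : ℝ) (F : Finset (Sym2 V)), pick k α F ⊆ F
  | 0, α, F => Finset.empty_subset _
  | k + 1, α, F => by
    show (if (1 : ℝ) / 2 ≤ α then (F \ halfSet F) ∪ pick k (2 * α - 1) (halfSet F)
      else pick k (2 * α) (halfSet F)) ⊆ F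
    split_ifs
    · exact Finset.union_subset (Finset.sdiff_subset)
        ((pick_subset k _ _).trans (halfSet_subset F))
    · exact (pick_subset k _ _).trans (halfSet_subset F)

lemma pick_bound : ∀ (k : ℕ) (α : ℝ) (F : Finset (Sym2 V)),
    (∀ e ∈ F, ¬ e.IsDiag) → 0 ≤ α → α ≤ 1 → ∀ v : V,
    |(dE (pick k α F) v : ℝ) - α * dE F v| ≤ 3 * k + (dE F v : ℝ) / 2 ^ k
  | 0, α, F, hdiag, hα0, hα1, v => by
    show |(dE (∅ : Finset (Sym2 V)) v : ℝ) - α * dE F v| ≤ _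
    rw [dE_empty]
    push_cast
    rw [zero_sub, abs_neg, abs_of_nonneg (by positivity)]
    have : α * (dE F v : ℝ) ≤ 1 * dE F v :=
      mul_le_mul_of_nonneg_right hα1 (Nat.cast_nonneg _)
    simpa using this
  | k + 1, α, F, hdiag, hα0, hα1, v => by
    have hdiagH : ∀ e ∈ halfSet F, ¬ e.IsDiag := fun e he => hdiag e (halfSet_subset F he)
    have spec := halfSet_spec hdiag v
    have spec1 : (dE F v : ℝ) ≤ 2 * dE (halfSet F) v + 2 := by exact_mod_cast spec.1
    have spec2 : 2 * (dE (halfSet F) v : ℝ) ≤ dE F v + 2 := by exact_mod_cast spec.2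
    have hpow : (1 : ℝ) ≤ 2 ^ k := one_le_pow₀ one_le_two
    have hpow' : (0 : ℝ) < 2 ^ k := by positivity
    have h2k : (dE (halfSet F) v : ℝ) / 2 ^ k ≤ (dE F v : ℝ) / 2 ^ (k + 1) + 1 := by
      have h2 : (dE (halfSet F) v : ℝ) ≤ (dE F v : ℝ) / 2 + 1 := by linarith
      calc (dE (halfSet F) v : ℝ) / 2 ^ k ≤ ((dE F v : ℝ) / 2 + 1) / 2 ^ k := by gcongr
        _ = (dE F v : ℝ) / 2 ^ (k + 1) + 1 / 2 ^ k := by rw [pow_succ]; ring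
        _ ≤ (dE F v : ℝ) / 2 ^ (k + 1) + 1 := by
            have : (1 : ℝ) / 2 ^ k ≤ 1 := by
              rw [div_le_one hpow']; exact hpow
            linarith
    show |(dE (if (1 : ℝ) / 2 ≤ α then (F \ halfSet F) ∪ pick k (2 * α - 1) (halfSet F)
      else pick k (2 * α) (halfSet F)) v : ℝ) - α * dE F v| ≤ _
    split_ifs with hα
    · have IH := pick_bound k (2 * α - 1) (halfSet F) hdiagH (by linarith) (by linarith) v
      have hdisj : Disjoint (F \ halfSet F) (pick k (2 * α - 1) (halfSet F)) :=
        Finset.sdiff_disjoint.mono_right (pick_subset k _ _)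
      have hEu : dE ((F \ halfSet F) ∪ pick k (2 * α - 1) (halfSet F)) v
          = dE (F \ halfSet F) v + dE (pick k (2 * α - 1) (halfSet F)) v := dE_union hdisj v
      have hsd : dE (halfSet F) v + dE (F \ halfSet F) v = dE F v :=
        dE_sdiff_add (halfSet_subset F) v
      have hFH : (dE (F \ halfSet F) v : ℝ) = dE F v - dE (halfSet F) v := by
        have := hsd
        push_cast [← this]
        ring
      have e1 : (1 - α) * ((dE F v : ℝ) - 2 * dE (halfSet F) v) ≤ 2 := by nlinarith
      have e2 : (-2 : ℝ) ≤ (1 - α) * ((dE F v : ℝ) - 2 * dE (halfSet F) v) := by nlinarith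
      rw [hEu]
      rw [abs_le] at IH ⊢
      push_cast
      push_cast at IH
      constructor <;> linarith [IH.1, IH.2, hFH, h2k, e1, e2]
    · push_neg at hα
      have IH := pick_bound k (2 * α) (halfSet F) hdiagH (by linarith) (by linarith) v
      have e1 : α * (2 * (dE (halfSet F) v : ℝ) - dE F v) ≤ 1 := by nlinarith
      have e2 : (-1 : ℝ) ≤ α * (2 * (dE (halfSet F) v : ℝ) - dE F v) := by nlinarith
      rw [abs_le] at IH ⊢
      push_cast
      push_cast at IH
      constructor <;> linarith [IH.1, IH.2, h2k, e1, e2]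


section Graph
variable {V : Type} [Fintype V] [DecidableEq V] (G : SimpleGraph V) [DecidableRel G.Adj]

variable {V : Type} [Fintype V] [DecidableEq V] (G : SimpleGraph V) [DecidableRel G.Adj]

lemma dIn_add (U : Finset V) (v : V) :
    dIn G U v + dIn G (Finset.univ \ U) v = G.degree v := by
  unfold dIn
  rw [← SimpleGraph.card_neighborFinset_eq_degree]
  have h1 : G.neighborFinset v ∩ (Finset.univ \ U) = G.neighborFinset v \ U := by
    ext x; simp [Finset.mem_sdiff]
  rw [h1]
  exact Finset.card_inter_add_card_sdiff _ _

lemma between_subset (U : Finset V) : between G U (Finset.univ \ U) ⊆ G.edgeFinset :=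
  Finset.filter_subset _ _

lemma dE_between_notmem (U : Finset V) (w : V) (hw : w ∉ U) :
    dE (between G U (Finset.univ \ U)) w = dIn G U w := by
  unfold dE dIn
  have himg : ((between G U (Finset.univ \ U)).filter (fun e => w ∈ e))
      = (G.neighborFinset w ∩ U).image (fun u => s(u, w)) := by
    ext e
    simp only [between, Finset.mem_filter, Finset.mem_image, Finset.mem_inter,
      SimpleGraph.mem_neighborFinset, Finset.mem_sdiff, Finset.mem_univ, true_and,
      SimpleGraph.mem_edgeFinset]
    constructor
    · rintro ⟨⟨he, a, haU, b, hbU, rfl⟩, hwe⟩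
      rcases Sym2.mem_iff.1 hwe with rfl | rfl
      · exact absurd haU hw
      · exact ⟨a, ⟨((SimpleGraph.mem_edgeSet G).1 he).symm, haU⟩, rfl⟩
    · rintro ⟨u, ⟨hadj, huU⟩, rfl⟩
      refine ⟨⟨?_, u, huU, w, hw, rfl⟩, Sym2.mem_mk_right u w⟩
      exact (SimpleGraph.mem_edgeSet G).2 hadj.symm
  rw [himg, Finset.card_image_of_injective _ (fun x y h => Sym2.congr_left.1 h)]

lemma dE_between_mem (U : Finset V) (u : V) (hu : u ∈ U) :
    dE (between G U (Finset.univ \ U)) u = dIn G (Finset.univ \ U) u := by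
  unfold dE dIn
  have himg : ((between G U (Finset.univ \ U)).filter (fun e => u ∈ e))
      = (G.neighborFinset u ∩ (Finset.univ \ U)).image (fun b => s(u, b)) := by
    ext e
    simp only [between, Finset.mem_filter, Finset.mem_image, Finset.mem_inter,
      SimpleGraph.mem_neighborFinset, Finset.mem_sdiff, Finset.mem_univ, true_and,
      SimpleGraph.mem_edgeFinset]
    constructor
    · rintro ⟨⟨he, a, haU, b, hbU, rfl⟩, hue⟩
      rcases Sym2.mem_iff.1 hue with rfl | rfl
      · exact ⟨b, ⟨(SimpleGraph.mem_edgeSet G).1 he, hbU⟩, rfl⟩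
      · exact absurd hu hbU
    · rintro ⟨b, ⟨hadj, hbU⟩, rfl⟩
      refine ⟨⟨(SimpleGraph.mem_edgeSet G).2 hadj, u, hu, b, hbU, rfl⟩,
        Sym2.mem_mk_left u b⟩
  rw [himg, Finset.card_image_of_injective _ (fun x y h => Sym2.congr_right.1 h)]


end Graph
end Split

/-- Given `U` as in Statement 1, with `W = V ∖ U` and `F = E(U,W)`, one can choose
`F_W ⊆ F` with `|d_{F_W}(w) − 10⁻⁴ d_U(w)| ≤ 10⁻⁶ d_U(w)` for all `w ∈ W` and
`|d_{F_W}(u) − 10⁻⁴ d_W(u)| ≤ 10⁻⁶ d_W(u)` for all `u ∈ U`. -/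
theorem statement2 :
    ∃ Δ₀ : ℕ, ∀ (V : Type) [Fintype V] [DecidableEq V]
      (G : SimpleGraph V) [DecidableRel G.Adj],
      Δ₀ ≤ G.maxDegree →
      (1e20 : ℝ) * Real.log G.maxDegree ≤ (G.minDegree : ℝ) →
      ∀ U : Finset V,
        (∀ v : V, |(dIn G U v : ℝ) - 1e-4 * G.degree v| ≤ 1e-6 * G.degree v) →
        ∃ F_W ⊆ between G U (Finset.univ \ U),
          (∀ w ∈ Finset.univ \ U,
            |(dE F_W w : ℝ) - 1e-4 * dIn G U w| ≤ 1e-6 * dIn G U w) ∧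
          (∀ u ∈ U,
            |(dE F_W u : ℝ) - 1e-4 * dIn G (Finset.univ \ U) u| ≤
              1e-6 * dIn G (Finset.univ \ U) u) := by
  refine ⟨3, ?_⟩
  intro V _ _ G _ hmax hmin U hU
  have hFsub : between G U (Finset.univ \ U) ⊆ G.edgeFinset := Split.between_subset G U
  have hFdiag : ∀ e ∈ between G U (Finset.univ \ U), ¬ e.IsDiag := fun e he =>
    G.not_isDiag_of_mem_edgeSet (SimpleGraph.mem_edgeFinset.1 (hFsub he))
  have hΔ : (3 : ℝ) ≤ (G.maxDegree : ℝ) := by exact_mod_cast hmax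
  have hlog : (1 : ℝ) ≤ Real.log (G.maxDegree : ℝ) := by
    rw [Real.le_log_iff_exp_le (by linarith)]
    calc Real.exp 1 ≤ 2.7182818286 := Real.exp_one_lt_d9.le
      _ ≤ 3 := by norm_num
      _ ≤ _ := hΔ
  have hδ : (1e20 : ℝ) ≤ (G.minDegree : ℝ) := by nlinarith [hmin, hlog]
  have hDeg : ∀ v : V, (1e20 : ℝ) ≤ (G.degree v : ℝ) := fun v =>
    hδ.trans (by exact_mod_cast G.minDegree_le_degree v)
  refine ⟨Split.pick 60 (1e-4) (between G U (Finset.univ \ U)),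
    Split.pick_subset _ _ _, ?_, ?_⟩
  · intro w hw
    have hw' : w ∉ U := (Finset.mem_sdiff.1 hw).2
    have hb := Split.pick_bound 60 (1e-4) _ hFdiag (by norm_num) (by norm_num) w
    rw [Split.dE_between_notmem G U w hw'] at hb
    have hUw := hU w
    rw [abs_le] at hUw
    have hDw := hDeg w
    have hdlow : (9.9e15 : ℝ) ≤ (dIn G U w : ℝ) := by nlinarith [hUw.1]
    refine hb.trans ?_
    push_cast
    have h1 : (dIn G U w : ℝ) / 2 ^ 60 ≤ 5e-7 * dIn G U w := by
      rw [div_le_iff₀ (by positivity)]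
      nlinarith [hdlow]
    linarith
  · intro u hu
    have hb := Split.pick_bound 60 (1e-4) _ hFdiag (by norm_num) (by norm_num) u
    rw [Split.dE_between_mem G U u hu] at hb
    have hUu := hU u
    rw [abs_le] at hUu
    have hDu := hDeg u
    have hadd : (dIn G U u : ℝ) + dIn G (Finset.univ \ U) u = G.degree u := by
      exact_mod_cast Split.dIn_add G U u
    have hdlow : (9.9e15 : ℝ) ≤ (dIn G (Finset.univ \ U) u : ℝ) := by
      nlinarith [hUu.2]
    refine hb.trans ?_
    push_cast
    have h1 : (dIn G (Finset.univ \ U) u : ℝ) / 2 ^ 60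
        ≤ 5e-7 * dIn G (Finset.univ \ U) u := by
      rw [div_le_iff₀ (by positivity)]
      nlinarith [hdlow]
    linarith
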